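/- (Calderón transference, weak type) For every map O admitting the approximation properties below, every nontrivial σ-finite system X with d commuting invertible measure-preserving transformations, every family P of integer-valued polynomials, and every Hölder tuple p, the best weak-type constant on X is dominated by that on the canonical system: C_O^P(X, p, w) ≤ C_O^P(X_d, p, w). -/

import Mathlib

open MeasureTheory ENNReal NNReal Filter

noncomputable section

variable {X : Type*} [MeasurableSpace X]

/-- The composite transformation `T₁^{P_{1,j}(n)} ⋯ T_d^{P_{d,j}(n)}`. -/
def compT {d m k : ℕ} (T : Fin d → Equiv.Perm X)
    (P : Fin d → Fin m → MvPolynomial (Fin k) ℤ) (j : Fin m) (n : Fin k → ℤ) :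
    Equiv.Perm X :=
  (List.ofFn fun i : Fin d => T i ^ MvPolynomial.eval n (P i j)).prod

/-- The multilinear polynomial average
`A_N^P f(x) = N^{-k} Σ_{n ∈ {1,…,N}^k} Π_j f_j(T₁^{P_{1,j}(n)} ⋯ T_d^{P_{d,j}(n)} x)`. -/
def polyAvg {d m k : ℕ} (T : Fin d → Equiv.Perm X)
    (P : Fin d → Fin m → MvPolynomial (Fin k) ℤ) (f : Fin m → X → ℝ)
    (N : ℕ) (x : X) : ℝ :=
  (∑ n ∈ Fintype.piFinset fun _ : Fin k => Finset.Icc (1 : ℤ) (N : ℤ),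
      ∏ j : Fin m, f j ((compT T P j n) x)) / (N : ℝ) ^ k

/-- The best constant `C_O^P(X, p, s)` in the strong type inequality
`‖O(A_N^P f : N ∈ ℕ)‖_{p₀} ≤ C Π_j ‖f_j‖_{p_j}`. -/
def strongConstO {d m k : ℕ} (μ : Measure X) (T : Fin d → Equiv.Perm X)
    (P : Fin d → Fin m → MvPolynomial (Fin k) ℤ)
    (O : (ℕ → ℝ) → ℝ≥0∞) (p : Fin (m + 1) → ℝ) : ℝ≥0∞ :=
  sInf {C | ∀ f : Fin m → X → ℝ,
    (∀ j : Fin m, MemLp (f j) (ENNReal.ofReal (p j.succ)) μ) →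
    (∫⁻ x, O (fun N => polyAvg T P f (N + 1) x) ^ p 0 ∂μ) ^ (1 / p 0) ≤
      C * ∏ j : Fin m, eLpNorm (f j) (ENNReal.ofReal (p j.succ)) μ}

/-- The best constant `C_O^P(X, p, w)` in the weak type inequality
`‖O(A_N^P f : N ∈ ℕ)‖_{p₀,∞} ≤ C Π_j ‖f_j‖_{p_j}`, where
`‖g‖_{p₀,∞} = sup_{λ>0} λ μ({x : |g(x)| ≥ λ})^{1/p₀}`. -/
def weakConstO {d m k : ℕ} (μ : Measure X) (T : Fin d → Equiv.Perm X)
    (P : Fin d → Fin m → MvPolynomial (Fin k) ℤ)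
    (O : (ℕ → ℝ) → ℝ≥0∞) (p : Fin (m + 1) → ℝ) : ℝ≥0∞ :=
  sInf {C | ∀ f : Fin m → X → ℝ,
    (∀ j : Fin m, MemLp (f j) (ENNReal.ofReal (p j.succ)) μ) →
    ∀ l : ℝ≥0∞, l * μ {x | l ≤ O fun N => polyAvg T P f (N + 1) x} ^ (1 / p 0) ≤
      C * ∏ j : Fin m, eLpNorm (f j) (ENNReal.ofReal (p j.succ)) μ}

/-- The shifts `T_{d,i}(l) = l + e_i` of the canonical system `X_d = ℤ^d`. -/
def canShift (d : ℕ) (i : Fin d) : Equiv.Perm (Fin d → ℤ) :=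
  Equiv.addRight (Pi.single i 1)

variable {μ : Measure X}

theorem aux_mp_pow (σ : Equiv.Perm X) (h1 : MeasurePreserving (⇑σ) μ μ) :
    ∀ n : ℕ, MeasurePreserving (⇑(σ ^ n)) μ μ := by
  intro n
  induction n with
  | zero => simpa using MeasurePreserving.id μ
  | succ n ih =>
    rw [pow_succ, Equiv.Perm.coe_mul]
    exact ih.comp h1

theorem aux_meas_pow_symm (σ : Equiv.Perm X) (h2 : Measurable (⇑σ.symm)) :
    ∀ n : ℕ, Measurable (⇑(σ ^ n).symm) := by
  intro n
  induction n with
  | zero => simpa [Equiv.Perm.one_symm] using measurable_id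
  | succ n ih =>
    have : (σ ^ (n+1)).symm = (σ ^ n).symm.trans σ.symm := by
      rw [← Equiv.Perm.inv_def, ← Equiv.Perm.inv_def, ← Equiv.Perm.inv_def, pow_succ, mul_inv_rev]
      rfl
    rw [this, Equiv.coe_trans]
    exact h2.comp ih

theorem aux_mp_zpow (σ : Equiv.Perm X) (h1 : MeasurePreserving (⇑σ) μ μ)
    (h2 : Measurable (⇑σ.symm)) (c : ℤ) : MeasurePreserving (⇑(σ ^ c)) μ μ := by
  cases c with
  | ofNat n => rw [Int.ofNat_eq_coe, zpow_natCast]; exact aux_mp_pow σ h1 n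
  | negSucc n =>
    rw [zpow_negSucc, Equiv.Perm.inv_def]
    exact MeasurePreserving.symm
      (⟨σ ^ (n+1), (aux_mp_pow σ h1 (n+1)).measurable, aux_meas_pow_symm σ h2 (n+1)⟩ : X ≃ᵐ X)
      (aux_mp_pow σ h1 (n+1))

theorem aux_mp_listProd (l : List (Equiv.Perm X))
    (h : ∀ σ ∈ l, MeasurePreserving (⇑σ) μ μ) :
    MeasurePreserving (⇑l.prod) μ μ := by
  induction l with
  | nil => simpa using MeasurePreserving.id μ
  | cons a l ih =>
    rw [List.prod_cons, Equiv.Perm.coe_mul]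
    exact (h a (List.mem_cons_self)).comp (ih fun σ hσ => h σ (List.mem_cons_of_mem a hσ))


def Tpow {d : ℕ} (T : Fin d → Equiv.Perm X) (v : Fin d → ℤ) : Equiv.Perm X :=
  (List.ofFn fun i => T i ^ v i).prod

theorem compT_eq_Tpow {d m k : ℕ} (T : Fin d → Equiv.Perm X)
    (P : Fin d → Fin m → MvPolynomial (Fin k) ℤ) (j : Fin m) (n : Fin k → ℤ) :
    compT T P j n = Tpow T (fun i => MvPolynomial.eval n (P i j)) := rfl

theorem Tpow_add {d : ℕ} (T : Fin d → Equiv.Perm X)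
    (hTcomm : ∀ i i', Commute (T i) (T i')) (v w : Fin d → ℤ) :
    Tpow T (v + w) = Tpow T v * Tpow T w := by
  induction d with
  | zero => simp [Tpow]
  | succ d ih =>
    have ihs := ih (fun i => T i.succ) (fun i i' => hTcomm _ _)
      (fun i => v i.succ) (fun i => w i.succ)
    simp only [Tpow, List.ofFn_succ, List.prod_cons, Pi.add_apply] at *
    rw [ihs]
    have hc : Commute (T 0 ^ w 0) ((List.ofFn fun i : Fin d => T i.succ ^ v i.succ).prod) := by
      apply Commute.list_prod_right
      intro σ hσ
      obtain ⟨i, rfl⟩ := List.mem_ofFn.mp hσ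
      exact (hTcomm 0 i.succ).zpow_zpow _ _
    rw [zpow_add, mul_assoc, mul_assoc, ← mul_assoc (T 0 ^ w 0), hc.eq, mul_assoc]

theorem Tpow_mp {d : ℕ} (T : Fin d → Equiv.Perm X)
    (hTmp : ∀ i, MeasurePreserving (⇑(T i)) μ μ)
    (hTsm : ∀ i, Measurable (⇑(T i).symm)) (v : Fin d → ℤ) :
    MeasurePreserving (⇑(Tpow T v)) μ μ := by
  apply aux_mp_listProd
  intro σ hσ
  obtain ⟨i, rfl⟩ := List.mem_ofFn.mp hσ
  exact aux_mp_zpow (T i) (hTmp i) (hTsm i) (v i)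

theorem Tpow_apply_add {d : ℕ} (T : Fin d → Equiv.Perm X)
    (hTcomm : ∀ i i', Commute (T i) (T i')) (v w : Fin d → ℤ) (x : X) :
    Tpow T (v + w) x = Tpow T w (Tpow T v x) := by
  rw [add_comm, Tpow_add T hTcomm, Equiv.Perm.mul_apply]

-- addRight lemmas
section AddRight
variable {A : Type*} [AddCommGroup A]

theorem addRight_zero' : Equiv.addRight (0 : A) = 1 := Equiv.ext fun x => add_zero x

theorem addRight_mul' (a b : A) :
    Equiv.addRight a * Equiv.addRight b = Equiv.addRight (a + b) := by
  apply Equiv.ext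
  intro x
  simp only [Equiv.Perm.mul_apply, Equiv.coe_addRight]
  abel

theorem addRight_pow' (a : A) (n : ℕ) :
    Equiv.addRight a ^ n = Equiv.addRight (n • a) := by
  induction n with
  | zero => simp [addRight_zero']
  | succ n ih => rw [pow_succ, ih, addRight_mul', succ_nsmul]

theorem addRight_zpow' (a : A) (c : ℤ) :
    Equiv.addRight a ^ c = Equiv.addRight (c • a) := by
  cases c with
  | ofNat n => rw [Int.ofNat_eq_coe, zpow_natCast, addRight_pow', natCast_zsmul]
  | negSucc n =>
    rw [zpow_negSucc, addRight_pow', negSucc_zsmul]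
    apply inv_eq_of_mul_eq_one_right
    rw [addRight_mul', add_neg_cancel, addRight_zero']

theorem addRight_listProd {q : ℕ} (a : Fin q → A) :
    (List.ofFn fun i => Equiv.addRight (a i)).prod = Equiv.addRight (∑ i, a i) := by
  induction q with
  | zero => simp [addRight_zero']
  | succ q ih =>
    rw [List.ofFn_succ, List.prod_cons, ih (fun i => a i.succ), addRight_mul',
      Fin.sum_univ_succ]

end AddRight


theorem compT_canShift {d m k : ℕ} (P : Fin d → Fin m → MvPolynomial (Fin k) ℤ)
    (j : Fin m) (n : Fin k → ℤ) :
    compT (canShift d) P j n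
      = Equiv.addRight (fun i => MvPolynomial.eval n (P i j)) := by
  unfold compT canShift
  have h1 : ∀ i : Fin d, Equiv.addRight ((Pi.single i 1 : Fin d → ℤ)) ^ MvPolynomial.eval n (P i j)
      = Equiv.addRight (Pi.single i (MvPolynomial.eval n (P i j))) := by
    intro i
    rw [addRight_zpow']
    congr 1
    funext x
    by_cases h : x = i <;> simp [Pi.single_apply, h]
  simp only [h1]
  rw [addRight_listProd]
  exact congrArg Equiv.addRight (Finset.univ_sum_single _)


def cubeZ (d R : ℕ) : Finset (Fin d → ℤ) :=
  Fintype.piFinset fun _ => Finset.Icc (-(R:ℤ)) R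

theorem cubeZ_card (d R : ℕ) : (cubeZ d R).card = (2*R+1)^d := by
  rw [cubeZ, Fintype.card_piFinset]
  simp [Int.card_Icc]
  congr 1
  omega

def vecP {d m k : ℕ} (P : Fin d → Fin m → MvPolynomial (Fin k) ℤ)
    (j : Fin m) (n : Fin k → ℤ) : Fin d → ℤ :=
  fun i => MvPolynomial.eval n (P i j)

def Sbound {d m k : ℕ} (P : Fin d → Fin m → MvPolynomial (Fin k) ℤ) (K : ℕ) : ℕ :=
  (Fintype.piFinset fun _ : Fin k => Finset.Icc (1:ℤ) (K:ℤ)).sup fun n =>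
    Finset.univ.sup fun ij : Fin d × Fin m => (MvPolynomial.eval n (P ij.1 ij.2)).natAbs

theorem vecP_bound {d m k : ℕ} (P : Fin d → Fin m → MvPolynomial (Fin k) ℤ) (K : ℕ)
    (j : Fin m) (n : Fin k → ℤ)
    (hn : n ∈ Fintype.piFinset fun _ : Fin k => Finset.Icc (1:ℤ) (K:ℤ)) (i : Fin d) :
    vecP P j n i ∈ Finset.Icc (-(Sbound P K : ℤ)) (Sbound P K) := by
  have h1 : (vecP P j n i).natAbs ≤ Sbound P K := by
    refine le_trans ?_ (Finset.le_sup hn)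
    exact Finset.le_sup (f := fun ij : Fin d × Fin m => (MvPolynomial.eval n (P ij.1 ij.2)).natAbs)
      (Finset.mem_univ (i, j))
  rw [Finset.mem_Icc]
  omega

theorem avg_match {d m k : ℕ} (T : Fin d → Equiv.Perm X)
    (hTcomm : ∀ i i', Commute (T i) (T i'))
    (P : Fin d → Fin m → MvPolynomial (Fin k) ℤ) (f : Fin m → X → ℝ) (x : X)
    (R K N : ℕ) (hNK : N + 1 ≤ K) (u : Fin d → ℤ) (hu : u ∈ cubeZ d R) :
    polyAvg (canShift d) P
      (fun j w => if w ∈ cubeZ d (R + Sbound P K) then f j (Tpow T w x) else 0) (N+1) u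
      = polyAvg T P f (N+1) (Tpow T u x) := by
  unfold polyAvg
  congr 1
  apply Finset.sum_congr rfl
  intro n hn
  have hnK : n ∈ Fintype.piFinset fun _ : Fin k => Finset.Icc (1:ℤ) (K:ℤ) := by
    rw [Fintype.mem_piFinset] at hn ⊢
    intro i
    have := hn i
    rw [Finset.mem_Icc] at this ⊢
    omega
  apply Finset.prod_congr rfl
  intro j _
  rw [compT_canShift, compT_eq_Tpow]
  have hmem : u + vecP P j n ∈ cubeZ d (R + Sbound P K) := by
    rw [cubeZ, Fintype.mem_piFinset]
    intro i
    have h1 := vecP_bound P K j n hnK i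
    rw [Finset.mem_Icc] at h1 ⊢
    rw [cubeZ, Fintype.mem_piFinset] at hu
    have h2 := hu i
    rw [Finset.mem_Icc] at h2
    simp only [Pi.add_apply]
    constructor <;> [push_cast; push_cast] <;> omega
  show (if u + vecP P j n ∈ cubeZ d (R + Sbound P K) then f j (Tpow T (u + vecP P j n) x) else 0)
      = f j (Tpow T (vecP P j n) (Tpow T u x))
  rw [if_pos hmem, Tpow_apply_add T hTcomm]

theorem eLpNorm_count_eq {α : Type*} [MeasurableSpace α] [MeasurableSingletonClass α]
    [Countable α] (s : Finset α) (g : α → ℝ) (hg : ∀ a ∉ s, g a = 0) {q : ℝ}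
    (hq : 0 < q) :
    eLpNorm g (ENNReal.ofReal q) Measure.count
      = (∑ a ∈ s, ((‖g a‖₊ : ℝ≥0∞)) ^ q) ^ (1/q) := by
  have hq0 : ENNReal.ofReal q ≠ 0 := by simp [ENNReal.ofReal_eq_zero]; linarith
  have hqt : ENNReal.ofReal q ≠ ∞ := ENNReal.ofReal_ne_top
  rw [eLpNorm_eq_lintegral_rpow_enorm_toReal hq0 hqt, MeasureTheory.lintegral_count,
    ENNReal.toReal_ofReal hq.le]
  simp only [enorm_eq_nnnorm]
  congr 1
  rw [tsum_eq_sum (s := s)]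
  intro a ha
  rw [hg a ha]
  simp only [nnnorm_zero, ENNReal.coe_zero]
  exact ENNReal.zero_rpow_of_pos hq

theorem memLp_count_of_support {α : Type*} [MeasurableSpace α] [MeasurableSingletonClass α]
    [Countable α] (s : Finset α) (g : α → ℝ) (hg : ∀ a ∉ s, g a = 0) {q : ℝ}
    (hq : 0 < q) : MemLp g (ENNReal.ofReal q) Measure.count := by
  refine ⟨(Measurable.of_discrete).aestronglyMeasurable, ?_⟩
  rw [eLpNorm_count_eq s g hg hq]
  apply ENNReal.rpow_lt_top_of_nonneg (by positivity)
  apply ne_of_lt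
  apply ENNReal.sum_lt_top.mpr
  intro a _
  exact ENNReal.rpow_lt_top_of_nonneg hq.le ENNReal.coe_ne_top

theorem rpow_finsetSum {ι : Type*} (s : Finset ι) (x : ℝ≥0∞) (hx0 : x ≠ 0) (hxt : x ≠ ∞)
    (e : ι → ℝ) : x ^ (∑ i ∈ s, e i) = ∏ i ∈ s, x ^ e i := by
  classical
  induction s using Finset.induction with
  | empty => simp
  | insert _ _ hns ih =>
    rw [Finset.sum_insert hns, Finset.prod_insert hns, ENNReal.rpow_add _ _ hx0 hxt, ih]

theorem le_of_cube_bound (S dd : ℕ) (A Q : ℝ≥0∞)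
    (h : ∀ R : ℕ, ((2*R+1 : ℕ) : ℝ≥0∞)^dd * A ≤ ((2*(R+S)+1 : ℕ) : ℝ≥0∞)^dd * Q) :
    A ≤ Q := by
  by_cases hQ : Q = ∞
  · simp [hQ]
  have hA : A ≠ ∞ := by
    intro hA
    have h0 := h 0
    rw [hA] at h0
    have hfin : ((2*(0+S)+1 : ℕ) : ℝ≥0∞)^dd * Q ≠ ∞ :=
      ENNReal.mul_ne_top (ENNReal.pow_ne_top (ENNReal.natCast_ne_top _)) hQ
    have htop : ((2*0+1 : ℕ) : ℝ≥0∞)^dd * ⊤ = ⊤ := by norm_num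
    rw [htop] at h0
    exact hfin (top_le_iff.mp h0)
  rw [← ENNReal.toReal_le_toReal hA hQ]
  have key : ∀ R : ℕ, A.toReal ≤ (1 + (2*S : ℝ)/(2*R+1))^dd * Q.toReal := by
    intro R
    have h1 := h R
    have h2 : ((2*R+1:ℕ):ℝ)^dd * A.toReal ≤ ((2*(R+S)+1:ℕ):ℝ)^dd * Q.toReal := by
      have h2' := ENNReal.toReal_mono (ENNReal.mul_ne_top (ENNReal.pow_ne_top
        (ENNReal.natCast_ne_top _)) hQ) h1
      rw [ENNReal.toReal_mul, ENNReal.toReal_mul, ENNReal.toReal_pow, ENNReal.toReal_pow,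
        ENNReal.toReal_natCast, ENNReal.toReal_natCast] at h2'
      simpa using h2'
    have h3 : (1 + (2*S:ℝ)/(2*R+1))^dd = ((2*(R+S)+1:ℕ):ℝ)^dd/((2*R+1:ℕ):ℝ)^dd := by
      rw [← div_pow]
      congr 1
      have hR : (0:ℝ) < 2*(R:ℝ)+1 := by positivity
      push_cast
      field_simp
      ring
    rw [h3, div_mul_eq_mul_div, le_div_iff₀ (by positivity)]
    calc A.toReal * ((2*R+1:ℕ):ℝ)^dd = ((2*R+1:ℕ):ℝ)^dd * A.toReal := mul_comm _ _
    _ ≤ _ := h2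
  have t1 : Tendsto (fun R : ℕ => (2*S:ℝ)/(2*R+1)) atTop (nhds 0) := by
    have h2 : Tendsto (fun R : ℕ => (2*R+1 : ℝ)) atTop atTop := by
      apply Filter.tendsto_atTop_add_const_right
      exact (tendsto_natCast_atTop_atTop).const_mul_atTop two_pos
    simpa [div_eq_mul_inv] using h2.inv_tendsto_atTop.const_mul (2*S:ℝ)
  have t2 : Tendsto (fun R : ℕ => (1 + (2*S:ℝ)/(2*R+1))^dd * Q.toReal) atTop
      (nhds ((1 + 0)^dd * Q.toReal)) := by
    exact (((tendsto_const_nhds).add t1).pow dd).mul_const _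
  simpa using ge_of_tendsto' t2 key

theorem polyAvg_measurable {d m k : ℕ} (T : Fin d → Equiv.Perm X)
    (hTmp : ∀ i, MeasurePreserving (⇑(T i)) μ μ)
    (hTsm : ∀ i, Measurable (⇑(T i).symm))
    (P : Fin d → Fin m → MvPolynomial (Fin k) ℤ) (f : Fin m → X → ℝ)
    (hfm : ∀ j, Measurable (f j)) (N : ℕ) :
    Measurable (fun x => polyAvg T P f N x) := by
  unfold polyAvg
  apply Measurable.div_const
  apply Finset.measurable_sum
  intro n _
  apply Finset.measurable_prod
  intro j _
  exact (hfm j).comp (by rw [compT_eq_Tpow]; exact (Tpow_mp T hTmp hTsm _).measurable)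

theorem measurable_finset_sup {α : Type*} [MeasurableSpace α] (s : Finset ℕ)
    (g : ℕ → α → ℝ≥0) (hg : ∀ i, Measurable (g i)) :
    Measurable fun x => s.sup fun i => g i x := by
  classical
  induction s using Finset.induction with
  | empty => simpa using measurable_const
  | insert _ _ hns ih =>
    simp only [Finset.sup_insert]
    exact (hg _).sup ih

theorem core_transfer {X : Type*} [MeasurableSpace X] (μ : Measure X)
    (d m k : ℕ) (hm : 0 < m)
    (T : Fin d → Equiv.Perm X)
    (hTmp : ∀ i, MeasurePreserving (⇑(T i)) μ μ)
    (hTsm : ∀ i, Measurable (⇑(T i).symm))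
    (hTcomm : ∀ i i', Commute (T i) (T i'))
    (P : Fin d → Fin m → MvPolynomial (Fin k) ℤ)
    (O : (ℕ → ℝ) → ℝ≥0∞)
    (OK : (K : ℕ) → (Fin K → ℝ) → ℝ≥0)
    (hOKm : ∀ K, Measurable (OK K))
    (hO1 : ∀ (a : ℕ → ℝ) (K : ℕ), ((OK K fun i => a i : ℝ≥0) : ℝ≥0∞) ≤ O a)
    (p : Fin (m + 1) → ℝ) (hp : ∀ i, 0 < p i)
    (hHolder : ∑ j : Fin m, 1 / p j.succ = 1 / p 0)
    (f : Fin m → X → ℝ) (hfm : ∀ j, Measurable (f j))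
    (C : ℝ≥0∞)
    (hC : ∀ g : Fin m → (Fin d → ℤ) → ℝ,
      (∀ j : Fin m, MemLp (g j) (ENNReal.ofReal (p j.succ)) Measure.count) →
      ∀ l : ℝ≥0∞, l * Measure.count {u | l ≤ O fun N => polyAvg (canShift d) P g (N + 1) u}
          ^ (1 / p 0) ≤
        C * ∏ j : Fin m, eLpNorm (g j) (ENNReal.ofReal (p j.succ)) Measure.count)
    (l' : ℝ≥0) (hl' : 0 < l') (K : ℕ) :
    (l' : ℝ≥0∞) * μ {x | l' ≤ (Finset.range K).sup
        fun K' => OK K' (fun i => polyAvg T P f (i + 1) x)} ^ (1 / p 0) ≤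
      C * ∏ j : Fin m, eLpNorm (f j) (ENNReal.ofReal (p j.succ)) μ := by
  have hp0 : 0 < p 0 := hp 0
  set B : Set X := {x | l' ≤ (Finset.range K).sup
      fun K' => OK K' (fun i => polyAvg T P f (i + 1) x)} with hBdef
  have hBmeas : MeasurableSet B := by
    apply measurableSet_le measurable_const
    apply measurable_finset_sup
    intro K'
    exact (hOKm K').comp (measurable_pi_lambda _ fun i =>
      polyAvg_measurable T hTmp hTsm P f hfm (i + 1))
  set S : ℕ := Sbound P K with hSdef
  set Df : ℝ≥0∞ := C * ∏ j : Fin m, eLpNorm (f j) (ENNReal.ofReal (p j.succ)) μ with hDf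
  set Q : ℝ≥0∞ := ((l' : ℝ≥0∞)⁻¹ * Df) ^ (p 0) with hQ
  have hl'0 : (l' : ℝ≥0∞) ≠ 0 := ENNReal.coe_ne_zero.mpr hl'.ne'
  have hl't : (l' : ℝ≥0∞) ≠ ∞ := ENNReal.coe_ne_top
  -- main counting estimate for each R
  have key : ∀ R : ℕ, ((2*R+1 : ℕ) : ℝ≥0∞)^d * μ B ≤ ((2*(R+S)+1 : ℕ) : ℝ≥0∞)^d * Q := by
    intro R
    set G : X → Fin m → (Fin d → ℤ) → ℝ :=
      fun x j w => if w ∈ cubeZ d (R + S) then f j (Tpow T w x) else 0 with hGdef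
    -- pointwise counting bound
    have perx : ∀ x : X, (((cubeZ d R).filter fun u => Tpow T u x ∈ B).card : ℝ≥0∞) ≤
        ((l' : ℝ≥0∞)⁻¹ * (C * ∏ j : Fin m,
          eLpNorm (G x j) (ENNReal.ofReal (p j.succ)) Measure.count)) ^ (p 0) := by
      intro x
      have hg : ∀ j : Fin m, MemLp (G x j) (ENNReal.ofReal (p j.succ)) Measure.count :=
        fun j => memLp_count_of_support (cubeZ d (R+S)) _ (fun a ha => if_neg ha) (hp _)
      have hCg := hC (G x) hg (l' : ℝ≥0∞)
      have hsub : (((cubeZ d R).filter fun u => Tpow T u x ∈ B) : Set (Fin d → ℤ)) ⊆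
          {u | (l' : ℝ≥0∞) ≤ O fun N => polyAvg (canShift d) P (G x) (N + 1) u} := by
        intro u hu
        rw [Finset.mem_coe, Finset.mem_filter] at hu
        obtain ⟨huR, huB⟩ := hu
        rw [hBdef, Set.mem_setOf_eq] at huB
        rw [Finset.le_sup_iff hl'] at huB
        obtain ⟨K', hK', hle⟩ := huB
        rw [Finset.mem_range] at hK'
        have hmatch : (fun i : Fin K' => polyAvg (canShift d) P (G x) (↑i + 1) u)
            = fun i : Fin K' => polyAvg T P f (↑i + 1) (Tpow T u x) := by
          funext i
          exact avg_match T hTcomm P f x R K i (by omega) u huR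
        rw [Set.mem_setOf_eq]
        refine le_trans ?_ (hO1 (fun N => polyAvg (canShift d) P (G x) (N + 1) u) K')
        rw [hmatch] at *
        exact_mod_cast hle
      have hcount : (((cubeZ d R).filter fun u => Tpow T u x ∈ B).card : ℝ≥0∞) ≤
          Measure.count {u | (l' : ℝ≥0∞) ≤ O fun N => polyAvg (canShift d) P (G x) (N + 1) u} := by
        rw [← Measure.count_apply_finset]
        exact measure_mono hsub
      have h5 : (((cubeZ d R).filter fun u => Tpow T u x ∈ B).card : ℝ≥0∞) ^ (1 / p 0) ≤
          (l' : ℝ≥0∞)⁻¹ * (C * ∏ j : Fin m,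
            eLpNorm (G x j) (ENNReal.ofReal (p j.succ)) Measure.count) := by
        rw [← ENNReal.mul_le_iff_le_inv hl'0 hl't]
        refine le_trans (mul_le_mul_right (ENNReal.rpow_le_rpow hcount (by positivity)) _) hCg
      calc (((cubeZ d R).filter fun u => Tpow T u x ∈ B).card : ℝ≥0∞)
          = ((((cubeZ d R).filter fun u => Tpow T u x ∈ B).card : ℝ≥0∞) ^ (1/p 0)) ^ (p 0) := by
            rw [← ENNReal.rpow_mul, one_div, inv_mul_cancel₀ hp0.ne', ENNReal.rpow_one]
        _ ≤ _ := ENNReal.rpow_le_rpow h5 hp0.le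
    -- W functions
    set W : Fin m → X → ℝ≥0∞ :=
      fun j x => ∑ u ∈ cubeZ d (R+S), ((‖f j (Tpow T u x)‖₊ : ℝ≥0∞)) ^ (p j.succ) with hW
    have hWmeas : ∀ j, Measurable (W j) := by
      intro j
      apply Finset.measurable_sum
      intro u _
      exact ENNReal.continuous_rpow_const.measurable.comp
        (measurable_coe_nnreal_ennreal.comp
          ((hfm j).comp (Tpow_mp T hTmp hTsm u).measurable).nnnorm)
    have hEg : ∀ (x : X) (j : Fin m),
        eLpNorm (G x j) (ENNReal.ofReal (p j.succ)) Measure.count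
          = (W j x) ^ (1 / p j.succ) := by
      intro x j
      rw [eLpNorm_count_eq (cubeZ d (R+S)) _ (fun a ha => if_neg ha) (hp _), hW]
      congr 1
      apply Finset.sum_congr rfl
      intro u hu
      rw [if_pos hu]
    set e : Fin m → ℝ := fun j => 1 / p j.succ * p 0 with he
    have he_nonneg : ∀ j, 0 ≤ e j := by
      intro j
      have := hp j.succ
      have := hp0
      rw [he]
      positivity
    have he_sum : ∑ j : Fin m, e j = 1 := by
      rw [he, ← Finset.sum_mul, hHolder, one_div, inv_mul_cancel₀ hp0.ne']
    have hpoint : ∀ x : X, ((l' : ℝ≥0∞)⁻¹ * (C * ∏ j : Fin m,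
        eLpNorm (G x j) (ENNReal.ofReal (p j.succ)) Measure.count)) ^ (p 0)
        = ((l' : ℝ≥0∞)⁻¹ * C) ^ (p 0) * ∏ j : Fin m, (W j x) ^ e j := by
      intro x
      rw [← mul_assoc, ENNReal.mul_rpow_of_nonneg _ _ hp0.le]
      congr 1
      rw [← ENNReal.prod_rpow_of_nonneg hp0.le]
      apply Finset.prod_congr rfl
      intro j _
      rw [hEg x j, ← ENNReal.rpow_mul]
    -- left integral
    have hsum : ∀ x : X, (((cubeZ d R).filter fun u => Tpow T u x ∈ B).card : ℝ≥0∞)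
        = ∑ u ∈ cubeZ d R, B.indicator (fun _ => (1:ℝ≥0∞)) (Tpow T u x) := by
      intro x
      rw [Finset.card_filter]
      push_cast
      apply Finset.sum_congr rfl
      intro u _
      rw [Set.indicator_apply]
    have hIntL : ∫⁻ x, (((cubeZ d R).filter fun u => Tpow T u x ∈ B).card : ℝ≥0∞) ∂μ
        = ((cubeZ d R).card : ℝ≥0∞) * μ B := by
      rw [lintegral_congr hsum, lintegral_finset_sum (cubeZ d R)
        (f := fun u x => B.indicator (fun _ => (1:ℝ≥0∞)) (Tpow T u x)) (fun u _ =>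
        (((measurable_const.indicator hBmeas).comp (Tpow_mp T hTmp hTsm u).measurable) :
          Measurable fun x => B.indicator (fun _ => (1:ℝ≥0∞)) (Tpow T u x)))]
      have : ∀ u ∈ cubeZ d R,
          ∫⁻ x, B.indicator (fun _ => (1:ℝ≥0∞)) (Tpow T u x) ∂μ = μ B := by
        intro u _
        have hcomp : (fun x => B.indicator (fun _ => (1:ℝ≥0∞)) (Tpow T u x))
            = (Tpow T u ⁻¹' B).indicator (fun _ => (1:ℝ≥0∞)) := by
          funext x
          by_cases hx : Tpow T u x ∈ B
          · rw [Set.indicator_of_mem hx, Set.indicator_of_mem (by exact hx)]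
          · rw [Set.indicator_of_notMem hx, Set.indicator_of_notMem (by exact hx)]
        rw [hcomp, lintegral_indicator_const (hBmeas.preimage (Tpow_mp T hTmp hTsm u).measurable),
          (Tpow_mp T hTmp hTsm u).measure_preimage hBmeas.nullMeasurableSet, one_mul]
      rw [Finset.sum_congr rfl this, Finset.sum_const, nsmul_eq_mul]
    -- right integral
    have hIntW : ∀ j : Fin m, ∫⁻ x, W j x ∂μ
        = ((cubeZ d (R+S)).card : ℝ≥0∞) *
          ∫⁻ x, ((‖f j x‖₊ : ℝ≥0∞)) ^ (p j.succ) ∂μ := by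
      intro j
      simp only [hW]
      rw [lintegral_finset_sum (cubeZ d (R+S))
        (f := fun u x => ((‖f j (Tpow T u x)‖₊ : ℝ≥0∞)) ^ (p j.succ)) (fun u _ =>
        ((ENNReal.continuous_rpow_const.measurable.comp (measurable_coe_nnreal_ennreal.comp
          ((hfm j).comp (Tpow_mp T hTmp hTsm u).measurable).nnnorm)) :
          Measurable fun x => ((‖f j (Tpow T u x)‖₊ : ℝ≥0∞)) ^ (p j.succ)))]
      have : ∀ u ∈ cubeZ d (R+S), ∫⁻ x, ((‖f j (Tpow T u x)‖₊ : ℝ≥0∞)) ^ (p j.succ) ∂μ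
          = ∫⁻ x, ((‖f j x‖₊ : ℝ≥0∞)) ^ (p j.succ) ∂μ := by
        intro u _
        exact (Tpow_mp T hTmp hTsm u).lintegral_comp
          (ENNReal.continuous_rpow_const.measurable.comp
            (measurable_coe_nnreal_ennreal.comp (hfm j).nnnorm))
      rw [Finset.sum_congr rfl this, Finset.sum_const, nsmul_eq_mul]
    have hIj : ∀ j : Fin m, (eLpNorm (f j) (ENNReal.ofReal (p j.succ)) μ) ^ (p j.succ)
        = ∫⁻ x, ((‖f j x‖₊ : ℝ≥0∞)) ^ (p j.succ) ∂μ := by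
      intro j
      have hne0 : ENNReal.ofReal (p j.succ) ≠ 0 := by
        simp only [ne_eq, ENNReal.ofReal_eq_zero, not_le]
        exact hp j.succ
      simp_rw [eLpNorm_eq_lintegral_rpow_enorm_toReal hne0 ENNReal.ofReal_ne_top, enorm_eq_nnnorm]
      rw [ENNReal.toReal_ofReal (hp j.succ).le, ← ENNReal.rpow_mul, one_div,
        inv_mul_cancel₀ (hp j.succ).ne', ENNReal.rpow_one]
    have hcardRS0 : ((cubeZ d (R+S)).card : ℝ≥0∞) ≠ 0 := by
      rw [cubeZ_card]
      positivity
    have hcardRSt : ((cubeZ d (R+S)).card : ℝ≥0∞) ≠ ∞ := ENNReal.natCast_ne_top _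
    -- chain
    calc ((2*R+1 : ℕ) : ℝ≥0∞)^d * μ B
        = ((cubeZ d R).card : ℝ≥0∞) * μ B := by rw [cubeZ_card]; push_cast; ring
      _ = ∫⁻ x, (((cubeZ d R).filter fun u => Tpow T u x ∈ B).card : ℝ≥0∞) ∂μ := hIntL.symm
      _ ≤ ∫⁻ x, ((l' : ℝ≥0∞)⁻¹ * (C * ∏ j : Fin m,
            eLpNorm (G x j) (ENNReal.ofReal (p j.succ)) Measure.count)) ^ (p 0) ∂μ :=
          lintegral_mono perx
      _ = ((l' : ℝ≥0∞)⁻¹ * C) ^ (p 0) * ∫⁻ x, ∏ j : Fin m, (W j x) ^ e j ∂μ := by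
          rw [lintegral_congr hpoint, lintegral_const_mul (f := fun x => ∏ j : Fin m, (W j x) ^ e j)
            _ (Finset.measurable_prod _
            (fun j _ => ((ENNReal.continuous_rpow_const.measurable.comp (hWmeas j)) :
              Measurable fun x => (W j x) ^ e j)))]
      _ ≤ ((l' : ℝ≥0∞)⁻¹ * C) ^ (p 0) * ∏ j : Fin m, (∫⁻ x, W j x ∂μ) ^ e j := by
          apply mul_le_mul_right
          exact ENNReal.lintegral_prod_norm_pow_le _ (fun j _ => (hWmeas j).aemeasurable)
            he_sum (fun j _ => he_nonneg j)
      _ = ((l' : ℝ≥0∞)⁻¹ * C) ^ (p 0) * (((cubeZ d (R+S)).card : ℝ≥0∞) *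
            ∏ j : Fin m, (eLpNorm (f j) (ENNReal.ofReal (p j.succ)) μ) ^ (p 0)) := by
          congr 1
          have he2 : ∀ j : Fin m, p j.succ * e j = p 0 := by
            intro j
            have := (hp j.succ).ne'
            rw [he]
            field_simp
          have step : ∀ j : Fin m, (∫⁻ x, W j x ∂μ) ^ e j
              = ((cubeZ d (R+S)).card : ℝ≥0∞) ^ e j *
                (eLpNorm (f j) (ENNReal.ofReal (p j.succ)) μ) ^ (p 0) := by
            intro j
            rw [hIntW j, ← hIj j, ENNReal.mul_rpow_of_nonneg _ _ (he_nonneg j),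
              ← ENNReal.rpow_mul, he2 j]
          rw [Finset.prod_congr rfl (fun j _ => step j), Finset.prod_mul_distrib,
            ← rpow_finsetSum _ _ hcardRS0 hcardRSt, he_sum, ENNReal.rpow_one]
      _ = ((2*(R+S)+1 : ℕ) : ℝ≥0∞)^d * Q := by
          have hcard : ((cubeZ d (R+S)).card : ℝ≥0∞) = ((2*(R+S)+1 : ℕ) : ℝ≥0∞)^d := by
            rw [cubeZ_card]
            push_cast
            ring
          have hQ' : Q = ((l' : ℝ≥0∞)⁻¹ * C) ^ (p 0) *
              ∏ j : Fin m, (eLpNorm (f j) (ENNReal.ofReal (p j.succ)) μ) ^ (p 0) := by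
            rw [hQ, hDf, ← mul_assoc, ENNReal.mul_rpow_of_nonneg _ _ hp0.le,
              ← ENNReal.prod_rpow_of_nonneg hp0.le]
          rw [hQ', hcard]
          ring
  -- conclude from key
  have hμB : μ B ≤ Q := le_of_cube_bound S d (μ B) Q key
  have hQr : Q ^ (1 / p 0) = (l' : ℝ≥0∞)⁻¹ * Df := by
    rw [hQ, ← ENNReal.rpow_mul, mul_one_div_cancel hp0.ne', ENNReal.rpow_one]
  calc (l' : ℝ≥0∞) * μ B ^ (1 / p 0)
      ≤ (l' : ℝ≥0∞) * Q ^ (1 / p 0) :=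
        mul_le_mul_right (ENNReal.rpow_le_rpow hμB (by positivity)) _
    _ = Df := by rw [hQr, ← mul_assoc, ENNReal.mul_inv_cancel hl'0 hl't, one_mul]

theorem weak_bound_meas {X : Type*} [MeasurableSpace X] (μ : Measure X)
    (d m k : ℕ) (hm : 0 < m)
    (T : Fin d → Equiv.Perm X)
    (hTmp : ∀ i, MeasurePreserving (⇑(T i)) μ μ)
    (hTsm : ∀ i, Measurable (⇑(T i).symm))
    (hTcomm : ∀ i i', Commute (T i) (T i'))
    (P : Fin d → Fin m → MvPolynomial (Fin k) ℤ)
    (O : (ℕ → ℝ) → ℝ≥0∞)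
    (OK : (K : ℕ) → (Fin K → ℝ) → ℝ≥0)
    (hOKm : ∀ K, Measurable (OK K))
    (hO1 : ∀ (a : ℕ → ℝ) (K : ℕ), ((OK K fun i => a i : ℝ≥0) : ℝ≥0∞) ≤ O a)
    (hO2 : ∀ a : ℕ → ℝ,
      Tendsto (fun K => ((OK K fun i => a i : ℝ≥0) : ℝ≥0∞)) atTop (nhds (O a)))
    (p : Fin (m + 1) → ℝ) (hp : ∀ i, 0 < p i)
    (hHolder : ∑ j : Fin m, 1 / p j.succ = 1 / p 0)
    (f : Fin m → X → ℝ) (hfm : ∀ j, Measurable (f j))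
    (C : ℝ≥0∞)
    (hC : ∀ g : Fin m → (Fin d → ℤ) → ℝ,
      (∀ j : Fin m, MemLp (g j) (ENNReal.ofReal (p j.succ)) Measure.count) →
      ∀ l : ℝ≥0∞, l * Measure.count {u | l ≤ O fun N => polyAvg (canShift d) P g (N + 1) u}
          ^ (1 / p 0) ≤
        C * ∏ j : Fin m, eLpNorm (g j) (ENNReal.ofReal (p j.succ)) Measure.count)
    (l : ℝ≥0∞) :
    l * μ {x | l ≤ O fun N => polyAvg T P f (N + 1) x} ^ (1 / p 0) ≤
      C * ∏ j : Fin m, eLpNorm (f j) (ENNReal.ofReal (p j.succ)) μ := by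
  have hp0 : 0 < p 0 := hp 0
  set Df : ℝ≥0∞ := C * ∏ j : Fin m, eLpNorm (f j) (ENNReal.ofReal (p j.succ)) μ with hDf
  -- step 1 : strict level sets at finite positive levels
  have step1 : ∀ l' : ℝ≥0, 0 < l' →
      μ {x | (l' : ℝ≥0∞) < O fun N => polyAvg T P f (N + 1) x}
        ≤ ((l' : ℝ≥0∞)⁻¹ * Df) ^ (p 0) := by
    intro l' hl'
    have hl'0 : (l' : ℝ≥0∞) ≠ 0 := ENNReal.coe_ne_zero.mpr hl'.ne'
    have hl't : (l' : ℝ≥0∞) ≠ ∞ := ENNReal.coe_ne_top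
    set B : ℕ → Set X := fun K => {x | l' ≤ (Finset.range K).sup
        fun K' => OK K' (fun i => polyAvg T P f (i + 1) x)} with hB
    have hKb : ∀ K, μ (B K) ≤ ((l' : ℝ≥0∞)⁻¹ * Df) ^ (p 0) := by
      intro K
      have h := core_transfer μ d m k hm T hTmp hTsm hTcomm P O OK hOKm hO1 p hp hHolder
        f hfm C hC l' hl' K
      have h2 : μ (B K) ^ (1 / p 0) ≤ (l' : ℝ≥0∞)⁻¹ * Df :=
        (ENNReal.mul_le_iff_le_inv hl'0 hl't).mp h
      calc μ (B K) = (μ (B K) ^ (1 / p 0)) ^ (p 0) := by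
            rw [← ENNReal.rpow_mul, one_div, inv_mul_cancel₀ hp0.ne', ENNReal.rpow_one]
        _ ≤ ((l' : ℝ≥0∞)⁻¹ * Df) ^ (p 0) := ENNReal.rpow_le_rpow h2 hp0.le
    have hsub : {x | (l' : ℝ≥0∞) < O fun N => polyAvg T P f (N + 1) x} ⊆ ⋃ K, B K := by
      intro x hx
      rw [Set.mem_setOf_eq] at hx
      have := (hO2 (fun N => polyAvg T P f (N + 1) x)).eventually_const_lt hx
      obtain ⟨K', hK'⟩ := this.exists
      rw [Set.mem_iUnion]
      refine ⟨K' + 1, ?_⟩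
      rw [hB, Set.mem_setOf_eq]
      refine le_trans ?_ (Finset.le_sup (Finset.mem_range.mpr (Nat.lt_succ_self K')))
      exact_mod_cast hK'.le
    have hmono : Monotone B := by
      intro K1 K2 hK x hx
      rw [hB, Set.mem_setOf_eq] at hx ⊢
      exact le_trans hx (Finset.sup_mono (Finset.range_subset_range.mpr hK))
    calc μ {x | (l' : ℝ≥0∞) < O fun N => polyAvg T P f (N + 1) x}
        ≤ μ (⋃ K, B K) := measure_mono hsub
      _ = ⨆ K, μ (B K) := hmono.measure_iUnion
      _ ≤ ((l' : ℝ≥0∞)⁻¹ * Df) ^ (p 0) := iSup_le hKb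
  -- step 2: weak-type bound at finite positive levels
  have step2 : ∀ l' : ℝ≥0, 0 < l' →
      (l' : ℝ≥0∞) * μ {x | (l' : ℝ≥0∞) < O fun N => polyAvg T P f (N + 1) x} ^ (1 / p 0)
        ≤ Df := by
    intro l' hl'
    have hl'0 : (l' : ℝ≥0∞) ≠ 0 := ENNReal.coe_ne_zero.mpr hl'.ne'
    have hl't : (l' : ℝ≥0∞) ≠ ∞ := ENNReal.coe_ne_top
    have h2 : μ {x | (l' : ℝ≥0∞) < O fun N => polyAvg T P f (N + 1) x} ^ (1 / p 0)
        ≤ (l' : ℝ≥0∞)⁻¹ * Df := by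
      calc μ {x | (l' : ℝ≥0∞) < O fun N => polyAvg T P f (N + 1) x} ^ (1 / p 0)
          ≤ (((l' : ℝ≥0∞)⁻¹ * Df) ^ (p 0)) ^ (1 / p 0) :=
            ENNReal.rpow_le_rpow (step1 l' hl') (by positivity)
        _ = (l' : ℝ≥0∞)⁻¹ * Df := by
            rw [← ENNReal.rpow_mul, mul_one_div_cancel hp0.ne', ENNReal.rpow_one]
    calc (l' : ℝ≥0∞) * μ {x | (l' : ℝ≥0∞) < O fun N => polyAvg T P f (N + 1) x} ^ (1 / p 0)
        ≤ (l' : ℝ≥0∞) * ((l' : ℝ≥0∞)⁻¹ * Df) := mul_le_mul_right h2 _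
      _ = Df := by rw [← mul_assoc, ENNReal.mul_inv_cancel hl'0 hl't, one_mul]
  -- now handle the general level l
  rcases eq_or_ne l 0 with rfl | hl0
  · simp
  rcases eq_or_ne l ∞ with rfl | hlt
  · set b := μ {x | (∞ : ℝ≥0∞) ≤ O fun N => polyAvg T P f (N + 1) x} with hb
    rcases eq_or_ne b 0 with hb0 | hbne
    · rw [hb0, ENNReal.zero_rpow_of_pos (by positivity), mul_zero]
      exact zero_le
    · have hDtop : Df = ∞ := by
        by_contra hD
        set c := b ^ (1 / p 0) with hc
        have hc0 : c ≠ 0 := by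
          rw [hc]
          simp only [ne_eq, ENNReal.rpow_eq_zero_iff, not_or]
          constructor
          · rintro ⟨h1, _⟩; exact hbne h1
          · rintro ⟨h1, h2⟩
            have : 0 < 1 / p 0 := by positivity
            linarith
        have hbound : ∀ n : ℕ, ((n : ℝ≥0∞) + 1) * c ≤ Df := by
          intro n
          have hpos : (0 : ℝ≥0) < (n : ℝ≥0) + 1 := by positivity
          have hsub : {x | (∞ : ℝ≥0∞) ≤ O fun N => polyAvg T P f (N + 1) x} ⊆
              {x | (((n : ℝ≥0) + 1 : ℝ≥0) : ℝ≥0∞) < O fun N => polyAvg T P f (N + 1) x} := by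
            intro x hx
            rw [Set.mem_setOf_eq] at hx ⊢
            exact lt_of_lt_of_le (ENNReal.coe_lt_top) hx
          have := step2 ((n : ℝ≥0) + 1) hpos
          have h3 : (((n : ℝ≥0) + 1 : ℝ≥0) : ℝ≥0∞) * c ≤ Df := by
            refine le_trans (mul_le_mul_right ?_ _) this
            exact ENNReal.rpow_le_rpow (measure_mono hsub) (by positivity)
          exact_mod_cast h3
        rcases eq_or_ne c ∞ with hct | hct
        · have := hbound 0
          rw [hct] at this
          simp only [Nat.cast_zero, zero_add, one_mul] at this
          exact hD (top_le_iff.mp this)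
        · have hup : ∀ n : ℕ, ((n : ℝ≥0∞) + 1) ≤ Df / c := by
            intro n
            rw [ENNReal.le_div_iff_mul_le (Or.inl hc0) (Or.inl hct)]
            exact hbound n
          have hfin : Df / c ≠ ∞ := by
            intro htop
            rcases ENNReal.div_eq_top.mp htop with ⟨_, h2⟩ | ⟨h1, _⟩
            · exact hc0 h2
            · exact hD h1
          obtain ⟨n, hn⟩ := ENNReal.exists_nat_gt hfin
          have := hup n
          have hle : (n : ℝ≥0∞) ≤ (n : ℝ≥0∞) + 1 := le_self_add
          exact absurd (le_trans hle this) (not_le.mpr hn)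
      rw [hDtop]
      exact le_top
  -- finite positive l
  · set lnn := l.toNNReal with hlnn
    have hlcoe : l = (lnn : ℝ≥0∞) := (ENNReal.coe_toNNReal hlt).symm
    have hlnn0 : 0 < lnn := by
      rw [hlnn]
      exact ENNReal.toNNReal_pos hl0 hlt
    set ρ := μ {x | l ≤ O fun N => polyAvg T P f (N + 1) x} ^ (1 / p 0) with hρ
    have hstep : ∀ l' : ℝ≥0, 0 < l' → (l' : ℝ≥0∞) < l → (l' : ℝ≥0∞) * ρ ≤ Df := by
      intro l' hl' hll
      have hsub : {x | l ≤ O fun N => polyAvg T P f (N + 1) x} ⊆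
          {x | (l' : ℝ≥0∞) < O fun N => polyAvg T P f (N + 1) x} := by
        intro x hx
        rw [Set.mem_setOf_eq] at hx ⊢
        exact lt_of_lt_of_le hll hx
      refine le_trans (mul_le_mul_right ?_ _) (step2 l' hl')
      exact ENNReal.rpow_le_rpow (measure_mono hsub) (by positivity)
    rcases eq_or_ne ρ 0 with hρ0 | hρ0
    · rw [hρ0, mul_zero]
      exact zero_le
    rcases eq_or_ne ρ ∞ with hρt | hρt
    · have h2 : ((lnn / 2 : ℝ≥0) : ℝ≥0∞) * ρ ≤ Df := by
        apply hstep
        · positivity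
        · rw [hlcoe]
          exact_mod_cast NNReal.half_lt_self hlnn0.ne'
      rw [hρt, ENNReal.mul_top (by exact_mod_cast (by positivity : ((lnn/2 : ℝ≥0) : ℝ≥0∞) ≠ 0))] at h2
      rw [top_le_iff.mp h2]
      exact le_top
    apply ENNReal.le_of_forall_nnreal_lt
    intro r hr
    rcases eq_or_ne (r : ℝ≥0∞) 0 with hr0 | hr0
    · rw [hr0]
      exact zero_le
    have hdiv : (r : ℝ≥0∞) / ρ < l := ENNReal.div_lt_of_lt_mul hr
    obtain ⟨c, hc1, hc2⟩ := exists_between hdiv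
    have hc0 : c ≠ 0 := by
      intro h
      rw [h] at hc1
      exact (not_le.mpr hc1) (zero_le)
    have hct : c ≠ ∞ := (hc2.trans_le le_top).ne
    have hcpos : 0 < c.toNNReal := ENNReal.toNNReal_pos hc0 hct
    have hccoe : c = (c.toNNReal : ℝ≥0∞) := (ENNReal.coe_toNNReal hct).symm
    have hmain : c * ρ ≤ Df := by
      rw [hccoe]
      apply hstep _ hcpos
      rw [← hccoe]
      exact hc2
    calc (r : ℝ≥0∞) = (r : ℝ≥0∞) / ρ * ρ := by
          rw [ENNReal.div_mul_cancel hρ0 hρt]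
      _ ≤ c * ρ := mul_le_mul_left hc1.le _
      _ ≤ Df := hmain


/-- Calderón transference principle, weak type: for every admissible `O`, every nontrivial
σ-finite system with commuting invertible bimeasurable measure-preserving transformations,
every family of integer polynomials `P`, and every Hölder tuple `p`,
`C_O^P(X, p, w) ≤ C_O^P(X_d, p, w)` where `X_d = ℤ^d` is the canonical system. -/
theorem calderon_transference_weak
    {X : Type*} [MeasurableSpace X] (μ : Measure X) [SigmaFinite μ]
    (hX : ∃ E : Set X, MeasurableSet E ∧ 0 < μ E ∧ μ E < ∞)
    (d m k : ℕ) (hd : 0 < d) (hm : 0 < m) (hk : 0 < k)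
    (T : Fin d → Equiv.Perm X)
    (hTmp : ∀ i, MeasurePreserving (⇑(T i)) μ μ)
    (hTsm : ∀ i, Measurable (⇑(T i).symm))
    (hTcomm : ∀ i i', Commute (T i) (T i'))
    (P : Fin d → Fin m → MvPolynomial (Fin k) ℤ)
    (O : (ℕ → ℝ) → ℝ≥0∞)
    (OK : (K : ℕ) → (Fin K → ℝ) → ℝ≥0)
    (hOKm : ∀ K, Measurable (OK K))
    (hO1 : ∀ (a : ℕ → ℝ) (K : ℕ), ((OK K fun i => a i : ℝ≥0) : ℝ≥0∞) ≤ O a)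
    (hO2 : ∀ a : ℕ → ℝ,
      Tendsto (fun K => ((OK K fun i => a i : ℝ≥0) : ℝ≥0∞)) atTop (nhds (O a)))
    (p : Fin (m + 1) → ℝ) (hp : ∀ i, 0 < p i)
    (hHolder : ∑ j : Fin m, 1 / p j.succ = 1 / p 0) :
    weakConstO μ T P O p ≤
      weakConstO (Measure.count : Measure (Fin d → ℤ)) (canShift d) P O p := by
  unfold weakConstO
  apply sInf_le_sInf
  intro C hC
  simp only [Set.mem_setOf_eq] at hC ⊢
  intro f hf l
  set f' : Fin m → X → ℝ := fun j => ((hf j).1.mk (f j)) with hf'def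
  have hf'm : ∀ j, Measurable (f' j) := fun j => (hf j).1.stronglyMeasurable_mk.measurable
  have hae : ∀ j, f j =ᵐ[μ] f' j := fun j => (hf j).1.ae_eq_mk
  have havg : ∀ᵐ x ∂μ, ∀ (j : Fin m) (n : Fin k → ℤ),
      f j (compT T P j n x) = f' j (compT T P j n x) := by
    rw [ae_all_iff]
    intro j
    rw [ae_all_iff]
    intro n
    have hq : Measure.QuasiMeasurePreserving (⇑(compT T P j n)) μ μ := by
      rw [compT_eq_Tpow]
      exact (Tpow_mp T hTmp hTsm _).quasiMeasurePreserving
    exact hq.ae_eq_comp (hae j)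
  have hseq : ∀ᵐ x ∂μ, (fun N => polyAvg T P f (N + 1) x)
      = (fun N => polyAvg T P f' (N + 1) x) := by
    filter_upwards [havg] with x hx
    funext N
    unfold polyAvg
    congr 1
    apply Finset.sum_congr rfl
    intro n _
    apply Finset.prod_congr rfl
    intro j _
    exact hx j n
  have hset : μ {x | l ≤ O fun N => polyAvg T P f (N + 1) x}
      = μ {x | l ≤ O fun N => polyAvg T P f' (N + 1) x} := by
    apply measure_congr
    rw [eventuallyEq_set]
    filter_upwards [hseq] with x hx
    simp only [Set.mem_setOf_eq, hx]
  have hprod : ∏ j : Fin m, eLpNorm (f j) (ENNReal.ofReal (p j.succ)) μ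
      = ∏ j : Fin m, eLpNorm (f' j) (ENNReal.ofReal (p j.succ)) μ :=
    Finset.prod_congr rfl fun j _ => eLpNorm_congr_ae (hae j)
  rw [hset, hprod]
  exact weak_bound_meas μ d m k hm T hTmp hTsm hTcomm P O OK hOKm hO1 hO2 p hp hHolder
    f' hf'm C hC l


end
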